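/- If Y ⊆ ℂ is a universal set, then |Y|⁺ = 2^ℵ₀; in particular 2^ℵ₀ is a successor cardinal. -/

import Mathlib

open Cardinal Set Filter Topology

def IsUniversal (Y : Set ℂ) : Prop :=
  Cardinal.mk Y < Cardinal.continuum ∧
    ∀ X : Set ℂ, Cardinal.mk X < Cardinal.continuum →
      ∃ f : ℂ → ℂ, Differentiable ℂ f ∧ (∀ c : ℂ, f ≠ fun _ => c) ∧ f '' X ⊆ Y

/-- A bounded infinite set on which an entire function is constant forces the
function to be globally constant. -/
lemma const_of_infinite_fiber {f : ℂ → ℂ} (hf : Differentiable ℂ f) {S : Set ℂ} {K : Set ℂ}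
    (hK : IsCompact K) (hSK : S ⊆ K) (hS : S.Infinite) {y : ℂ} (hy : ∀ z ∈ S, f z = y) :
    f = fun _ => y := by
  obtain ⟨z₀, hz₀K, hz₀⟩ := hS.exists_accPt_of_subset_isCompact hK hSK
  have hfreq : ∃ᶠ z in 𝓝[≠] z₀, f z = y := by
    have : ∃ᶠ z in 𝓝 z₀, z ≠ z₀ ∧ z ∈ S := (accPt_iff_frequently).mp hz₀
    rw [frequently_nhdsWithin_iff]
    exact this.mono fun z hz => ⟨hy z hz.2, hz.1⟩
  exact AnalyticOnNhd.eq_of_frequently_eq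
    (Complex.analyticOnNhd_univ_iff_differentiable.mpr hf) analyticOnNhd_const hfreq

theorem universal_succ (Y : Set ℂ) (hY : IsUniversal Y) :
    Order.succ (Cardinal.mk Y) = Cardinal.continuum := by
  obtain ⟨hYlt, huniv⟩ := hY
  refine le_antisymm (Order.succ_le_of_lt hYlt) ?_
  by_contra hlt
  replace hlt : Order.succ (Cardinal.mk Y) < Cardinal.continuum := not_le.mp hlt
  -- the compact "ambient" set of cardinality continuum
  set K : Set ℂ := Complex.ofReal '' Set.Icc (0 : ℝ) 1 with hKdef
  have hKcard : Cardinal.mk K = Cardinal.continuum := by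
    rw [hKdef, Cardinal.mk_image_eq Complex.ofReal_injective]
    exact Cardinal.mk_Icc_real zero_lt_one
  have hKcomp : IsCompact K := (isCompact_Icc).image Complex.continuous_ofReal
  -- choose the cardinal κ
  set κ : Cardinal := max (Order.succ (Cardinal.mk Y)) ℵ₀ with hκdef
  have hκlt : κ < Cardinal.continuum := by
    rw [hκdef]
    exact max_lt hlt Cardinal.aleph0_lt_continuum
  -- choose X ⊆ K with mk X = κ
  obtain ⟨X, hXK, hXcard⟩ := Cardinal.le_mk_iff_exists_subset.mp
    (hKcard ▸ hκlt.le)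
  obtain ⟨f, hf, hfne, hfY⟩ := huniv X (by rw [hXcard]; exact hκlt)
  -- some fiber is infinite
  have key : ∃ y : ℂ, (X ∩ f ⁻¹' {y}).Infinite := by
    by_contra hfin
    push_neg at hfin
    have hcover : X ⊆ ⋃ y ∈ Y, (X ∩ f ⁻¹' {y}) := by
      intro x hx
      exact Set.mem_biUnion (hfY ⟨x, hx, rfl⟩) ⟨hx, rfl⟩
    rcases lt_or_ge (Cardinal.mk Y) ℵ₀ with hYfin | hYinf
    · -- Y finite: X would be finite, but mk X = κ ≥ ℵ₀
      have hYf : Y.Finite := by rwa [Cardinal.lt_aleph0_iff_set_finite] at hYfin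
      have hXfin : X.Finite :=
        Set.Finite.subset (hYf.biUnion fun y _ => hfin y) hcover
      have : Cardinal.mk X < ℵ₀ := by rwa [Cardinal.lt_aleph0_iff_set_finite]
      rw [hXcard] at this
      exact absurd (le_max_right _ _) this.not_ge
    · -- Y infinite: mk X ≤ mk Y * ℵ₀ = mk Y < succ (mk Y) ≤ κ
      have h1 : Cardinal.mk X ≤ Cardinal.mk (⋃ y ∈ Y, (X ∩ f ⁻¹' {y})) :=
        Cardinal.mk_le_mk_of_subset hcover
      have h2 : Cardinal.mk (⋃ y ∈ Y, (X ∩ f ⁻¹' {y})) ≤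
          Cardinal.mk Y * ⨆ y : Y, Cardinal.mk (X ∩ f ⁻¹' {(y : ℂ)} : Set ℂ) :=
        Cardinal.mk_biUnion_le _ _
      have h3 : (⨆ y : Y, Cardinal.mk (X ∩ f ⁻¹' {(y : ℂ)} : Set ℂ)) ≤ ℵ₀ := by
        apply ciSup_le'
        intro y
        exact ((hfin y).lt_aleph0).le
      have h4 : Cardinal.mk X ≤ Cardinal.mk Y * ℵ₀ :=
        h1.trans (h2.trans (mul_le_mul_right h3 _))
      rw [Cardinal.mul_aleph0_eq hYinf, hXcard] at h4
      have : Order.succ (Cardinal.mk Y) ≤ Cardinal.mk Y :=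
        (le_max_left _ _).trans h4
      exact absurd this (Order.lt_succ _).not_ge
  obtain ⟨y, hSinf⟩ := key
  have hconst : f = fun _ => y :=
    const_of_infinite_fiber hf hKcomp ((Set.inter_subset_left).trans hXK) hSinf
      (fun z hz => hz.2)
  exact hfne y hconst
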